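/- Let E_f be the 3×3 matrix with rows (a,1,0), (0,b,1), (0,0,c), where a,b,c ≥ 1 are integers, and P = {γ ∈ ℝ_{≥0}^3 : aγ_1+γ_2 ≤ 1, bγ_2+γ_3 ≤ 1, cγ_3 ≤ 1}. If c = 1, or c ≠ 1 and a ≠ 1, then the point ρ = ((bc−c+1)/(abc), (c−1)/(bc), 1/c) is the unique point of P maximizing the coordinate sum |γ| = γ_1+γ_2+γ_3. -/

import Mathlib

set_option maxHeartbeats 1000000 in
/-- For the splitting polytope `P = {γ ∈ ℝ_{≥0}^3 : aγ₁+γ₂ ≤ 1, bγ₂+γ₃ ≤ 1, cγ₃ ≤ 1}`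
of the mapping `(x^a + x y^b, y z^c)` with integers `a,b,c ≥ 1`: if `c = 1`, or
`c ≠ 1` and `a ≠ 1`, then `ρ = ((bc−c+1)/(abc), (c−1)/(bc), 1/c)` is the unique
point of `P` maximizing the coordinate sum. -/

theorem stmt8 (a b c : ℕ) (ha : 1 ≤ a) (hb : 1 ≤ b) (hc : 1 ≤ c)
    (hcase : c = 1 ∨ (c ≠ 1 ∧ a ≠ 1)) :
    (((0:ℝ) ≤ ((b:ℝ) * c - c + 1) / ((a:ℝ) * b * c) ∧
      (0:ℝ) ≤ ((c:ℝ) - 1) / ((b:ℝ) * c) ∧ (0:ℝ) ≤ 1 / (c:ℝ) ∧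
      (a:ℝ) * (((b:ℝ) * c - c + 1) / ((a:ℝ) * b * c)) + ((c:ℝ) - 1) / ((b:ℝ) * c) ≤ 1 ∧
      (b:ℝ) * (((c:ℝ) - 1) / ((b:ℝ) * c)) + 1 / (c:ℝ) ≤ 1 ∧
      (c:ℝ) * (1 / (c:ℝ)) ≤ 1) ∧
    ∀ γ₁ γ₂ γ₃ : ℝ, 0 ≤ γ₁ → 0 ≤ γ₂ → 0 ≤ γ₃ →
      (a:ℝ) * γ₁ + γ₂ ≤ 1 → (b:ℝ) * γ₂ + γ₃ ≤ 1 → (c:ℝ) * γ₃ ≤ 1 →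
      (γ₁ + γ₂ + γ₃ ≤ ((b:ℝ) * c - c + 1) / ((a:ℝ) * b * c) + ((c:ℝ) - 1) / ((b:ℝ) * c) + 1 / (c:ℝ) ∧
        (γ₁ + γ₂ + γ₃ =
            ((b:ℝ) * c - c + 1) / ((a:ℝ) * b * c) + ((c:ℝ) - 1) / ((b:ℝ) * c) + 1 / (c:ℝ) →
          γ₁ = ((b:ℝ) * c - c + 1) / ((a:ℝ) * b * c) ∧
          γ₂ = ((c:ℝ) - 1) / ((b:ℝ) * c) ∧ γ₃ = 1 / (c:ℝ)))) := by
  have hA : (1:ℝ) ≤ (a:ℝ) := by exact_mod_cast ha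
  have hB : (1:ℝ) ≤ (b:ℝ) := by exact_mod_cast hb
  have hC : (1:ℝ) ≤ (c:ℝ) := by exact_mod_cast hc
  have hA0 : (0:ℝ) < a := by linarith
  have hB0 : (0:ℝ) < b := by linarith
  have hC0 : (0:ℝ) < c := by linarith
  have hAne : (a:ℝ) ≠ 0 := hA0.ne'
  have hBne : (b:ℝ) ≠ 0 := hB0.ne'
  have hCne : (c:ℝ) ≠ 0 := hC0.ne'
  have hBC : (1:ℝ) ≤ (b:ℝ) * c := by nlinarith
  have hS : ((b:ℝ) * c - c + 1) / ((a:ℝ) * b * c) + ((c:ℝ) - 1) / ((b:ℝ) * c) + 1 / (c:ℝ)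
      = ((b:ℝ)*c + (a:ℝ)*c + (a:ℝ)*b - a - c + 1) / ((a:ℝ) * b * c) := by
    field_simp
    ring
  constructor
  · refine ⟨div_nonneg (by nlinarith) (by positivity), div_nonneg (by linarith) (by positivity),
      by positivity, le_of_eq ?_, le_of_eq ?_, le_of_eq ?_⟩
    · field_simp
      ring
    · field_simp
      ring
    · field_simp
  · intro γ₁ γ₂ γ₃ h1 h2 h3 h4 h5 h6
    have m1 : (0:ℝ) ≤ (b:ℝ)*c := by positivity
    have m2 : (0:ℝ) ≤ (c:ℝ)*((a:ℝ)-1) := by nlinarith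
    have m3 : (1:ℝ) ≤ (a:ℝ)*b - a + 1 := by nlinarith
    have h4' := mul_le_mul_of_nonneg_left h4 m1
    have h5' := mul_le_mul_of_nonneg_left h5 m2
    have h6' := mul_le_mul_of_nonneg_left h6 (by linarith : (0:ℝ) ≤ (a:ℝ)*b - a + 1)
    have key : (a:ℝ)*b*c*(γ₁+γ₂+γ₃) ≤ (b:ℝ)*c + (a:ℝ)*c + (a:ℝ)*b - a - c + 1 := by
      nlinarith [h4', h5', h6']
    constructor
    · rw [hS, le_div_iff₀ (by positivity : (0:ℝ) < (a:ℝ)*b*c)]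
      nlinarith [key]
    · intro heq
      rw [hS, eq_div_iff (by positivity : ((a:ℝ)*b*c) ≠ 0)] at heq
      have heq' : (a:ℝ)*b*c*(γ₁+γ₂+γ₃) = (b:ℝ)*c + (a:ℝ)*c + (a:ℝ)*b - a - c + 1 := by
        linear_combination heq
      -- γ₃ is always pinned
      have s3le : ((a:ℝ)*b - a + 1) * (1 - (c:ℝ)*γ₃) ≤ 0 := by linarith [h4', h5', heq']
      have h3eq : (c:ℝ)*γ₃ = 1 := by
        by_contra h
        have hlt : (c:ℝ)*γ₃ < 1 := lt_of_le_of_ne h6 h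
        linarith [s3le, mul_pos (show (0:ℝ) < (a:ℝ)*b - a + 1 by linarith)
          (show (0:ℝ) < 1 - (c:ℝ)*γ₃ by linarith)]
      have hg3 : γ₃ = 1 / (c:ℝ) := by field_simp; linarith
      rcases hcase with h1c | ⟨hcne, hane⟩
      · -- c = 1
        have hC1 : (c:ℝ) = 1 := by rw [h1c]; norm_num
        have hg3' : γ₃ = 1 := by rw [hg3, hC1]; norm_num
        have hg2 : γ₂ = 0 := by nlinarith
        have hg1 : γ₁ = 1 / (a:ℝ) := by
          rw [hC1, hg3', hg2] at heq'
          have hab : (b:ℝ) * ((a:ℝ) * γ₁) = (b:ℝ) * 1 := by ring_nf; ring_nf at heq'; linarith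
          have := mul_left_cancel₀ hBne hab
          field_simp
          linarith [this]
        refine ⟨?_, ?_, hg3⟩
        · rw [hg1, hC1]; field_simp; ring
        · rw [hg2, hC1]; norm_num
      · -- a ≠ 1 : a ≥ 2
        have ha2 : 2 ≤ a := by omega
        have hA2 : (2:ℝ) ≤ (a:ℝ) := by exact_mod_cast ha2
        have s2le : (c:ℝ)*((a:ℝ)-1) * (1 - ((b:ℝ)*γ₂ + γ₃)) ≤ 0 := by
          linarith [h4', heq', h3eq]
        have s1le : (b:ℝ)*c * (1 - ((a:ℝ)*γ₁ + γ₂)) ≤ 0 := by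
          linarith [h5', heq', h3eq]
        have e2 : (b:ℝ)*γ₂ + γ₃ = 1 := by
          by_contra h
          have hlt : (b:ℝ)*γ₂ + γ₃ < 1 := lt_of_le_of_ne h5 h
          nlinarith [mul_pos (show (0:ℝ) < (c:ℝ)*((a:ℝ)-1) by nlinarith)
            (show (0:ℝ) < 1 - ((b:ℝ)*γ₂ + γ₃) by linarith)]
        have e1 : (a:ℝ)*γ₁ + γ₂ = 1 := by
          by_contra h
          have hlt : (a:ℝ)*γ₁ + γ₂ < 1 := lt_of_le_of_ne h4 h
          nlinarith [mul_pos (show (0:ℝ) < (b:ℝ)*c by positivity)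
            (show (0:ℝ) < 1 - ((a:ℝ)*γ₁ + γ₂) by linarith)]
        have hg2 : γ₂ = ((c:ℝ) - 1) / ((b:ℝ)*c) := by
          rw [hg3] at e2
          field_simp at e2 ⊢
          linarith [e2]
        have hg1 : γ₁ = ((b:ℝ)*c - c + 1) / ((a:ℝ)*b*c) := by
          rw [hg2] at e1
          field_simp at e1 ⊢
          linarith [e1]
        exact ⟨hg1, hg2, hg3⟩
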